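/- (In-sample bias of the ridge estimator.) Let W ∈ {0,1}^{N×n} and F ∈ {0,1}^{N×p} be indicator matrices (each row of W has exactly one entry equal to 1, and likewise for F), set B = W^⊤F, D_w = W^⊤W, D_f = F^⊤F, and fix λ_w, λ_f > 0, μ ∈ ℝ^n, φ ∈ ℝ^p. Let U be a random vector in ℝ^N with E U = 0, set Y = Wμ + Fφ + U, and define the ridge estimator (μ̂, φ̂) as the unique solution of the regularized normal equations ( (D_w + λ_w I_n, B); (B^⊤, D_f + λ_f I_p) ) (μ̂; φ̂) = (W^⊤Y; F^⊤Y). Then E(μ̂ − μ) = L̃_{w,λ}^{-1} ( −λ_w μ + λ_f B D_{f,λ}^{-1} φ ) and E(φ̂ − φ) = L̃_{f,λ}^{-1} ( λ_w B^⊤ D_{w,λ}^{-1} μ − λ_f φ ), where D_{w,λ} = D_w + λ_w I_n, D_{f,λ} = D_f + λ_f I_p, L̃_{w,λ} = D_{w,λ} − B D_{f,λ}^{-1} B^⊤ and L̃_{f,λ} = D_{f,λ} − B^⊤ D_{w,λ}^{-1} B (all invertible since λ_w, λ_f > 0). -/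

import Mathlib

open Matrix MeasureTheory BigOperators

private lemma schurPosDef₂₂ {m n : Type*} [Fintype m] [Fintype n] [DecidableEq n]
    {A : Matrix m m ℝ} {B : Matrix m n ℝ} {D : Matrix n n ℝ} (hD : D.PosDef)
    (hM : (Matrix.fromBlocks A B Bᴴ D).PosDef) : (A - B * D⁻¹ * Bᴴ).PosDef := by
  haveI := hD.isUnit.invertible
  refine Matrix.PosDef.of_dotProduct_mulVec_pos ?_ ?_
  · exact (Matrix.IsHermitian.fromBlocks₂₂ A B hD.1).mp hM.1
  · intro x hx
    have h := hM.dotProduct_mulVec_pos (x := x ⊕ᵥ (-((D⁻¹ * Bᴴ) *ᵥ x)))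
      (fun h0 => hx (funext fun i => congrFun h0 (Sum.inl i)))
    rw [dotProduct_mulVec, Matrix.schur_complement_eq₂₂ A B _ _ hD.1] at h
    simp only [add_neg_cancel, neg_add_cancel, star_zero, zero_dotProduct, Matrix.zero_vecMul,
      zero_add] at h
    rwa [dotProduct_mulVec]

private lemma schurPosDef₁₁ {m n : Type*} [Fintype m] [Fintype n] [DecidableEq m]
    {A : Matrix m m ℝ} {B : Matrix m n ℝ} {D : Matrix n n ℝ} (hA : A.PosDef)
    (hM : (Matrix.fromBlocks A B Bᴴ D).PosDef) : (D - Bᴴ * A⁻¹ * B).PosDef := by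
  haveI := hA.isUnit.invertible
  refine Matrix.PosDef.of_dotProduct_mulVec_pos ?_ ?_
  · exact (Matrix.IsHermitian.fromBlocks₁₁ B D hA.1).mp hM.1
  · intro y hy
    have h := hM.dotProduct_mulVec_pos (x := (-((A⁻¹ * B) *ᵥ y)) ⊕ᵥ y)
      (fun h0 => hy (funext fun i => congrFun h0 (Sum.inr i)))
    rw [dotProduct_mulVec, Matrix.schur_complement_eq₁₁ B D _ _ hA.1] at h
    simp only [add_neg_cancel, neg_add_cancel, star_zero, zero_dotProduct, Matrix.zero_vecMul,
      zero_add] at h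
    rwa [dotProduct_mulVec]

theorem stmt_19 (N n p : ℕ) (hN : 0 < N) (hn : 0 < n) (hp : 0 < p)
    (W : Matrix (Fin N) (Fin n) ℝ) (F : Matrix (Fin N) (Fin p) ℝ)
    (hW01 : ∀ s i, W s i = 0 ∨ W s i = 1) (hWrow : ∀ s, ∑ i, W s i = 1)
    (hF01 : ∀ s j, F s j = 0 ∨ F s j = 1) (hFrow : ∀ s, ∑ j, F s j = 1)
    (B : Matrix (Fin n) (Fin p) ℝ) (hB : B = Wᵀ * F)
    (Dw : Matrix (Fin n) (Fin n) ℝ) (hDw : Dw = Wᵀ * W)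
    (Df : Matrix (Fin p) (Fin p) ℝ) (hDf : Df = Fᵀ * F)
    (lamw lamf : ℝ) (hlamw : 0 < lamw) (hlamf : 0 < lamf)
    (μ : Fin n → ℝ) (φ : Fin p → ℝ)
    {Ω : Type} [MeasurableSpace Ω] (P : Measure Ω) [IsProbabilityMeasure P]
    (U : Ω → Fin N → ℝ)
    (hUint : ∀ s, Integrable (fun ω => U ω s) P)
    (hUmean : ∀ s, ∫ ω, U ω s ∂P = 0)
    (Y : Ω → Fin N → ℝ) (hY : ∀ ω, Y ω = W.mulVec μ + F.mulVec φ + U ω)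
    (muhat : Ω → Fin n → ℝ) (phihat : Ω → Fin p → ℝ)
    (hnormal1 : ∀ ω, (Dw + lamw • (1 : Matrix (Fin n) (Fin n) ℝ)).mulVec (muhat ω) +
      B.mulVec (phihat ω) = Wᵀ.mulVec (Y ω))
    (hnormal2 : ∀ ω, Bᵀ.mulVec (muhat ω) +
      (Df + lamf • (1 : Matrix (Fin p) (Fin p) ℝ)).mulVec (phihat ω) = Fᵀ.mulVec (Y ω)) :
    (∀ i, ∫ ω, (muhat ω i - μ i) ∂P =
      (((Dw + lamw • (1 : Matrix (Fin n) (Fin n) ℝ)) -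
          B * (Df + lamf • (1 : Matrix (Fin p) (Fin p) ℝ))⁻¹ * Bᵀ)⁻¹).mulVec
        (-(lamw • μ) +
          lamf • (B * (Df + lamf • (1 : Matrix (Fin p) (Fin p) ℝ))⁻¹).mulVec φ) i) ∧
    (∀ j, ∫ ω, (phihat ω j - φ j) ∂P =
      (((Df + lamf • (1 : Matrix (Fin p) (Fin p) ℝ)) -
          Bᵀ * (Dw + lamw • (1 : Matrix (Fin n) (Fin n) ℝ))⁻¹ * B)⁻¹).mulVec
        (lamw • (Bᵀ * (Dw + lamw • (1 : Matrix (Fin n) (Fin n) ℝ))⁻¹).mulVec μ -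
          lamf • φ) j) := by
  set Dwl := Dw + lamw • (1 : Matrix (Fin n) (Fin n) ℝ) with hDwl_def
  set Dfl := Df + lamf • (1 : Matrix (Fin p) (Fin p) ℝ) with hDfl_def
  set Lw := Dwl - B * Dfl⁻¹ * Bᵀ with hLw_def
  set Lf := Dfl - Bᵀ * Dwl⁻¹ * B with hLf_def
  -- transpose fact
  have hBt : Fᵀ * W = Bᵀ := by rw [hB, Matrix.transpose_mul, Matrix.transpose_transpose]
  -- positive definiteness
  have hWW : (Wᵀ * W).PosSemidef := by
    have := Matrix.posSemidef_conjTranspose_mul_self W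
    rwa [Matrix.conjTranspose_eq_transpose_of_trivial] at this
  have hFF : (Fᵀ * F).PosSemidef := by
    have := Matrix.posSemidef_conjTranspose_mul_self F
    rwa [Matrix.conjTranspose_eq_transpose_of_trivial] at this
  have hIw : (lamw • (1 : Matrix (Fin n) (Fin n) ℝ)).PosDef := by
    rw [Matrix.smul_one_eq_diagonal]
    exact Matrix.posDef_diagonal_iff.mpr fun _ => hlamw
  have hIf : (lamf • (1 : Matrix (Fin p) (Fin p) ℝ)).PosDef := by
    rw [Matrix.smul_one_eq_diagonal]
    exact Matrix.posDef_diagonal_iff.mpr fun _ => hlamf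
  have hDwlP : Dwl.PosDef := by
    rw [hDwl_def, hDw]; exact Matrix.PosDef.posSemidef_add hWW hIw
  have hDflP : Dfl.PosDef := by
    rw [hDfl_def, hDf]; exact Matrix.PosDef.posSemidef_add hFF hIf
  have hMP : (Matrix.fromBlocks Dwl B Bᵀ Dfl).PosDef := by
    have hblock : Matrix.fromBlocks Dwl B Bᵀ Dfl =
        (Matrix.fromRows Wᵀ Fᵀ) * (Matrix.fromCols W F) +
          Matrix.fromBlocks (lamw • 1) 0 0 (lamf • 1) := by
      rw [Matrix.fromRows_mul_fromCols, Matrix.fromBlocks_add, hBt]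
      rw [hDwl_def, hDfl_def, hDw, hDf, hB]
      congr 1 <;> simp
    rw [hblock]
    refine Matrix.PosDef.posSemidef_add ?_ ?_
    · have h1 : Matrix.fromRows Wᵀ Fᵀ = (Matrix.fromCols W F)ᴴ := by
        rw [Matrix.conjTranspose_eq_transpose_of_trivial, Matrix.transpose_fromCols]
      rw [h1]
      exact Matrix.posSemidef_conjTranspose_mul_self _
    · rw [Matrix.smul_one_eq_diagonal, Matrix.smul_one_eq_diagonal, Matrix.fromBlocks_diagonal]
      exact Matrix.posDef_diagonal_iff.mpr fun i => by cases i <;> [exact hlamw; exact hlamf]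
  have hLwP : Lw.PosDef := by
    have := schurPosDef₂₂ hDflP (by
      rwa [Matrix.conjTranspose_eq_transpose_of_trivial] : (Matrix.fromBlocks Dwl B Bᴴ Dfl).PosDef)
    rwa [Matrix.conjTranspose_eq_transpose_of_trivial] at this
  have hLfP : Lf.PosDef := by
    have := schurPosDef₁₁ hDwlP (by
      rwa [Matrix.conjTranspose_eq_transpose_of_trivial] : (Matrix.fromBlocks Dwl B Bᴴ Dfl).PosDef)
    rwa [Matrix.conjTranspose_eq_transpose_of_trivial] at this
  -- determinant units
  have hDwlU : IsUnit Dwl.det := (Matrix.isUnit_iff_isUnit_det _).mp hDwlP.isUnit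
  have hDflU : IsUnit Dfl.det := (Matrix.isUnit_iff_isUnit_det _).mp hDflP.isUnit
  have hLwU : IsUnit Lw.det := (Matrix.isUnit_iff_isUnit_det _).mp hLwP.isUnit
  have hLfU : IsUnit Lf.det := (Matrix.isUnit_iff_isUnit_det _).mp hLfP.isUnit
  -- solve the system pointwise
  set Mw := Lw⁻¹ * (Wᵀ - B * Dfl⁻¹ * Fᵀ) with hMw_def
  set Mf := Lf⁻¹ * (Fᵀ - Bᵀ * Dwl⁻¹ * Wᵀ) with hMf_def
  have hmu : ∀ ω, muhat ω = Mw *ᵥ Y ω := by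
    intro ω
    have e2 : phihat ω = Dfl⁻¹ *ᵥ (Fᵀ *ᵥ Y ω - Bᵀ *ᵥ muhat ω) := by
      have := hnormal2 ω
      have h' : Dfl *ᵥ phihat ω = Fᵀ *ᵥ Y ω - Bᵀ *ᵥ muhat ω := by
        rw [← this]; abel
      rw [← h', Matrix.mulVec_mulVec, Matrix.nonsing_inv_mul _ hDflU, Matrix.one_mulVec]
    have e1 : Lw *ᵥ muhat ω = (Wᵀ - B * Dfl⁻¹ * Fᵀ) *ᵥ Y ω := by
      have h1 := hnormal1 ω
      rw [e2] at h1
      simp only [Matrix.mulVec_sub, Matrix.mulVec_mulVec, ← Matrix.mul_assoc] at h1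
      funext i
      have h2 := congrFun h1 i
      simp only [hLw_def, Matrix.sub_mulVec, Pi.add_apply, Pi.sub_apply] at h2 ⊢
      linarith
    rw [hMw_def, ← Matrix.mulVec_mulVec, ← e1, Matrix.mulVec_mulVec,
      Matrix.nonsing_inv_mul _ hLwU, Matrix.one_mulVec]
  have hphi : ∀ ω, phihat ω = Mf *ᵥ Y ω := by
    intro ω
    have e2 : muhat ω = Dwl⁻¹ *ᵥ (Wᵀ *ᵥ Y ω - B *ᵥ phihat ω) := by
      have := hnormal1 ω
      have h' : Dwl *ᵥ muhat ω = Wᵀ *ᵥ Y ω - B *ᵥ phihat ω := by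
        rw [← this]; abel
      rw [← h', Matrix.mulVec_mulVec, Matrix.nonsing_inv_mul _ hDwlU, Matrix.one_mulVec]
    have e1 : Lf *ᵥ phihat ω = (Fᵀ - Bᵀ * Dwl⁻¹ * Wᵀ) *ᵥ Y ω := by
      have h1 := hnormal2 ω
      rw [e2] at h1
      simp only [Matrix.mulVec_sub, Matrix.mulVec_mulVec, ← Matrix.mul_assoc] at h1
      funext j
      have h2 := congrFun h1 j
      simp only [hLf_def, Matrix.sub_mulVec, Pi.add_apply, Pi.sub_apply] at h2 ⊢
      linarith
    rw [hMf_def, ← Matrix.mulVec_mulVec, ← e1, Matrix.mulVec_mulVec,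
      Matrix.nonsing_inv_mul _ hLfU, Matrix.one_mulVec]
  -- mean of Y
  set c : Fin N → ℝ := W *ᵥ μ + F *ᵥ φ with hc_def
  have hYint : ∀ s, Integrable (fun ω => Y ω s) P := by
    intro s
    have : (fun ω => Y ω s) = fun ω => c s + U ω s := by
      funext ω; rw [hY ω]; simp [hc_def]
    rw [this]
    exact (integrable_const (c s)).add (hUint s)
  have hYmean : ∀ s, ∫ ω, Y ω s ∂P = c s := by
    intro s
    have : (fun ω => Y ω s) = fun ω => c s + U ω s := by
      funext ω; rw [hY ω]; simp [hc_def]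
    rw [this, integral_add (integrable_const _) (hUint s), hUmean s, integral_const]
    simp
  -- generic expectation computation
  have key : ∀ (k : ℕ) (M : Matrix (Fin k) (Fin N) ℝ) (v : Fin k → ℝ) (i : Fin k),
      ∫ ω, ((M *ᵥ Y ω) i - v i) ∂P = (M *ᵥ c) i - v i := by
    intro k M v i
    have hint : Integrable (fun ω => (M *ᵥ Y ω) i) P := by
      have : (fun ω => (M *ᵥ Y ω) i) = fun ω => ∑ s, M i s * Y ω s := by
        funext ω; simp [Matrix.mulVec, dotProduct]
      rw [this]
      exact integrable_finset_sum _ fun s _ => (hYint s).const_mul _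
    rw [integral_sub hint (integrable_const _), integral_const]
    simp only [measure_univ, ENNReal.toReal_one, probReal_univ, smul_eq_mul, one_mul, one_smul]
    congr 1
    have : (fun ω => (M *ᵥ Y ω) i) = fun ω => ∑ s, M i s * Y ω s := by
      funext ω; simp [Matrix.mulVec, dotProduct]
    rw [this, integral_finset_sum _ fun s _ => (hYint s).const_mul _]
    simp only [Matrix.mulVec, dotProduct]
    exact Finset.sum_congr rfl fun s _ => by rw [integral_const_mul, hYmean s]
  -- matrix identities
  have hMwW : Mw * W = 1 - lamw • Lw⁻¹ := by
    have h1 : (Wᵀ - B * Dfl⁻¹ * Fᵀ) * W = Lw - lamw • 1 := by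
      rw [Matrix.sub_mul, Matrix.mul_assoc (B * Dfl⁻¹), hBt, ← hDw, hLw_def, hDwl_def]
      abel
    rw [hMw_def, Matrix.mul_assoc, h1, Matrix.mul_sub, Matrix.nonsing_inv_mul _ hLwU,
      Matrix.mul_smul, Matrix.mul_one]
  have hMwF : Mw * F = lamf • (Lw⁻¹ * (B * Dfl⁻¹)) := by
    have h1 : (Wᵀ - B * Dfl⁻¹ * Fᵀ) * F = lamf • (B * Dfl⁻¹) := by
      rw [Matrix.sub_mul, Matrix.mul_assoc (B * Dfl⁻¹), ← hDf, ← hB]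
      have : Df = Dfl - lamf • 1 := by rw [hDfl_def]; abel
      rw [this, Matrix.mul_sub, Matrix.mul_assoc B, Matrix.nonsing_inv_mul _ hDflU,
        Matrix.mul_one, Matrix.mul_smul, Matrix.mul_one]
      abel
    rw [hMw_def, Matrix.mul_assoc, h1, Matrix.mul_smul]
  have hMfF : Mf * F = 1 - lamf • Lf⁻¹ := by
    have h1 : (Fᵀ - Bᵀ * Dwl⁻¹ * Wᵀ) * F = Lf - lamf • 1 := by
      rw [Matrix.sub_mul, Matrix.mul_assoc (Bᵀ * Dwl⁻¹), ← hDf, ← hB, hLf_def, hDfl_def]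
      abel
    rw [hMf_def, Matrix.mul_assoc, h1, Matrix.mul_sub, Matrix.nonsing_inv_mul _ hLfU,
      Matrix.mul_smul, Matrix.mul_one]
  have hMfW : Mf * W = lamw • (Lf⁻¹ * (Bᵀ * Dwl⁻¹)) := by
    have h1 : (Fᵀ - Bᵀ * Dwl⁻¹ * Wᵀ) * W = lamw • (Bᵀ * Dwl⁻¹) := by
      rw [Matrix.sub_mul, Matrix.mul_assoc (Bᵀ * Dwl⁻¹), ← hDw, hBt]
      have : Dw = Dwl - lamw • 1 := by rw [hDwl_def]; abel
      rw [this, Matrix.mul_sub, Matrix.mul_assoc Bᵀ, Matrix.nonsing_inv_mul _ hDwlU,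
        Matrix.mul_one, Matrix.mul_smul, Matrix.mul_one]
      abel
    rw [hMf_def, Matrix.mul_assoc, h1, Matrix.mul_smul]
  -- final vector identities
  have hvecw : Mw *ᵥ c - μ = Lw⁻¹ *ᵥ (-(lamw • μ) + lamf • (B * Dfl⁻¹) *ᵥ φ) := by
    simp only [hc_def, Matrix.mulVec_add, Matrix.mulVec_mulVec, hMwW, hMwF,
      Matrix.mulVec_neg, Matrix.mulVec_smul, Matrix.sub_mulVec,
      Matrix.one_mulVec, Matrix.smul_mulVec]
    abel
  have hvecf : Mf *ᵥ c - φ = Lf⁻¹ *ᵥ (lamw • (Bᵀ * Dwl⁻¹) *ᵥ μ - lamf • φ) := by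
    simp only [hc_def, Matrix.mulVec_add, Matrix.mulVec_mulVec, hMfW, hMfF,
      Matrix.mulVec_sub, Matrix.mulVec_smul, Matrix.sub_mulVec,
      Matrix.one_mulVec, Matrix.smul_mulVec]
    abel
  constructor
  · intro i
    have : ∫ ω, (muhat ω i - μ i) ∂P = (Mw *ᵥ c) i - μ i := by
      rw [← key n Mw μ i]
      exact integral_congr_ae (Filter.Eventually.of_forall fun ω => by simp only [hmu ω])
    rw [this]
    exact congrFun hvecw i
  · intro j
    have : ∫ ω, (phihat ω j - φ j) ∂P = (Mf *ᵥ c) j - φ j := by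
      rw [← key p Mf φ j]
      exact integral_congr_ae (Filter.Eventually.of_forall fun ω => by simp only [hphi ω])
    rw [this]
    exact congrFun hvecf j
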